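/- arXiv:1712.08564 — 3 statements merged into one kernel-verified Lean document; each statement's English description precedes it below -/
import Mathlib

section
/- Let two circles with centers c₁, c₂ ∈ ℂ and radii R₁, R₂ > 0 intersect orthogonally, and let z be one of their intersection points. Consider a triangle inscribed in the first circle with one vertex at z and one side subtending an inscribed angle θ over a chord through z; if the corresponding chord is also a chord of a configuration where the inscribed angle in the second circle over the same chord is φ, then θ + φ = π/2 and cot θ = R₁/R₂. In particular cot θ + cot φ = R₁/R₂ + R₂/R₁. -/
open EuclideanGeometry

/-- Cotangent of a real number. -/
noncomputable def rcot (x : ℝ) : ℝ := Real.cos x / Real.sin x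

lemma coord_of_abs (x y : ℂ) (r : ℝ) (h : ‖x - y‖ = r) :
    (x.re - y.re)^2 + (x.im - y.im)^2 = r^2 := by
  rw [← h, Complex.sq_norm, Complex.normSq_apply, Complex.sub_re, Complex.sub_im]; ring

lemma key_chord (ux uy ax ay bx By R₁ R₂ : ℝ)
    (h1 : ux*ax + uy*ay = 0) (h2 : ux*bx + uy*By = 0)
    (h3 : ux^2 + uy^2 + (ax^2 + ay^2) = 4*R₁^2)
    (h4 : ux^2 + uy^2 + (bx^2 + By^2) = 4*R₂^2)
    (h5 : (ax - bx)^2 + (ay - By)^2 = 4*(R₁^2 + R₂^2))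
    (ht : ux^2 + uy^2 ≠ 0) :
    (ux^2 + uy^2) * (R₁^2 + R₂^2) = 4*R₁^2*R₂^2 := by
  set t := ux^2 + uy^2 with htdef
  have hab : ax*bx + ay*By = -t := by linear_combination (h3 + h4 - h5) / 2
  have hqr : (ux*ay - uy*ax) * (ux*By - uy*bx) = -t^2 := by
    linear_combination t * hab - (ux*bx + uy*By) * h1
  have hA : (ax^2 + ay^2) * t = (ux*ay - uy*ax)^2 := by
    linear_combination (ux*ax + uy*ay) * h1
  have hB : (bx^2 + By^2) * t = (ux*By - uy*bx)^2 := by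
    linear_combination (ux*bx + uy*By) * h2
  have hAB : (ax^2 + ay^2) * (bx^2 + By^2) = t^2 := by
    have hc : t^2 * ((ax^2+ay^2)*(bx^2+By^2)) = t^2 * (t^2) := by
      calc t^2 * ((ax^2+ay^2)*(bx^2+By^2)) = ((ax^2+ay^2)*t) * ((bx^2+By^2)*t) := by ring
        _ = ((ux*ay - uy*ax) * (ux*By - uy*bx))^2 := by rw [hA, hB]; ring
        _ = t^2 * t^2 := by rw [hqr]; ring
    exact mul_left_cancel₀ (pow_ne_zero 2 ht) hc
  linear_combination ((bx^2+By^2)/4) * h3 + (R₁^2 - t/4) * h4 - (1/4) * hAB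

lemma sin_angle_eq (c : ℂ) (R : ℝ) (hR : 0 < R) (z w p : ℂ)
    (hz : ‖z - c‖ = R) (hw : ‖w - c‖ = R)
    (hp : ‖p - c‖ = R) (hzw : z ≠ w) (hpz : p ≠ z) (hpw : p ≠ w) :
    Real.sin (∠ z p w) = dist z w / (2 * R) := by
  haveI : Fact (Module.finrank ℝ ℂ = 2) := Complex.finrank_real_complex_fact
  haveI : Module.Oriented ℝ ℂ (Fin 2) := ⟨Complex.orientation⟩
  set s : EuclideanGeometry.Sphere ℂ := ⟨c, R⟩ with hs
  have hms : ∀ x : ℂ, ‖x - c‖ = R → x ∈ s := fun x hx => by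
    simp [EuclideanGeometry.mem_sphere, hs, Complex.dist_eq, hx]
  have hlaw := EuclideanGeometry.Sphere.dist_div_sin_oangle_eq_two_mul_radius
    (hms z hz) (hms p hp) (hms w hw) hpz.symm hzw hpw
  have habs : |Real.Angle.sin (∡ z p w)| = Real.sin (∠ z p w) := by
    have hnn : 0 ≤ Real.sin (∠ z p w) :=
      Real.sin_nonneg_of_nonneg_of_le_pi (EuclideanGeometry.angle_nonneg _ _ _)
        (EuclideanGeometry.angle_le_pi _ _ _)
    rcases EuclideanGeometry.oangle_eq_angle_or_eq_neg_angle hpz.symm hpw.symm with h | h <;>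
      rw [h] <;> simp [Real.Angle.sin_coe, abs_of_nonneg hnn]
  rw [habs] at hlaw
  have hsne : Real.sin (∠ z p w) ≠ 0 := by
    intro h0
    rw [h0, div_zero] at hlaw
    have : s.radius = R := rfl
    nlinarith [hlaw, hR]
  have : s.radius = R := rfl
  rw [this] at hlaw
  rw [div_eq_iff hsne] at hlaw
  rw [hlaw]
  field_simp


theorem stmt_17 (c₁ c₂ : ℂ) (R₁ R₂ : ℝ) (hR₁ : 0 < R₁) (hR₂ : 0 < R₂)
    (horth : ‖c₁ - c₂‖ ^ 2 = R₁ ^ 2 + R₂ ^ 2)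
    -- `z` and `w` are the two intersection points, spanning the common chord
    (z w : ℂ) (hzw : z ≠ w)
    (hz₁ : ‖z - c₁‖ = R₁) (hz₂ : ‖z - c₂‖ = R₂)
    (hw₁ : ‖w - c₁‖ = R₁) (hw₂ : ‖w - c₂‖ = R₂)
    -- `θ` is an inscribed angle in the first circle over the common chord
    (p : ℂ) (hp : ‖p - c₁‖ = R₁) (hpz : p ≠ z) (hpw : p ≠ w)
    -- `φ` is an inscribed angle in the second circle over the common chord
    (q : ℂ) (hq : ‖q - c₂‖ = R₂) (hqz : q ≠ z) (hqw : q ≠ w)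
    (θ φ : ℝ) (hθ : θ = ∠ z p w) (hφ : φ = ∠ z q w)
    (hθa : θ < Real.pi / 2) (hφa : φ < Real.pi / 2) :
    θ + φ = Real.pi / 2 ∧ rcot θ = R₁ / R₂ ∧
      rcot θ + rcot φ = R₁ / R₂ + R₂ / R₁ := by
  -- chord length squared
  have hz₁' := coord_of_abs z c₁ R₁ hz₁
  have hz₂' := coord_of_abs z c₂ R₂ hz₂
  have hw₁' := coord_of_abs w c₁ R₁ hw₁
  have hw₂' := coord_of_abs w c₂ R₂ hw₂
  have horth' : (c₁.re - c₂.re)^2 + (c₁.im - c₂.im)^2 = R₁^2 + R₂^2 := by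
    have := coord_of_abs c₁ c₂ (‖c₁ - c₂‖) rfl
    rw [horth] at this; exact this
  have ht : (z.re - w.re)^2 + (z.im - w.im)^2 ≠ 0 := by
    intro h0
    apply hzw
    have h1 : (z.re - w.re)^2 = 0 :=
      le_antisymm (by nlinarith [sq_nonneg (z.im - w.im)]) (sq_nonneg _)
    have h2 : (z.im - w.im)^2 = 0 :=
      le_antisymm (by nlinarith [sq_nonneg (z.re - w.re)]) (sq_nonneg _)
    have h1' : z.re - w.re = 0 := by
      have := sq_eq_zero_iff.mp h1; exact this
    have h2' : z.im - w.im = 0 := by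
      have := sq_eq_zero_iff.mp h2; exact this
    exact Complex.ext (by linarith) (by linarith)
  have hL : ((z.re - w.re)^2 + (z.im - w.im)^2) * (R₁^2 + R₂^2) = 4*R₁^2*R₂^2 := by
    apply key_chord (z.re - w.re) (z.im - w.im) (z.re + w.re - 2*c₁.re) (z.im + w.im - 2*c₁.im)
      (z.re + w.re - 2*c₂.re) (z.im + w.im - 2*c₂.im) R₁ R₂ _ _ _ _ _ ht
    · linear_combination hz₁' - hw₁'
    · linear_combination hz₂' - hw₂'
    · linear_combination 2*hz₁' + 2*hw₁'
    · linear_combination 2*hz₂' + 2*hw₂'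
    · linear_combination 4*horth'
  have hdzw : (dist z w)^2 = (z.re - w.re)^2 + (z.im - w.im)^2 := by
    rw [Complex.dist_eq, Complex.sq_norm, Complex.normSq_apply, Complex.sub_re, Complex.sub_im]; ring
  -- d = sqrt(R₁² + R₂²)
  set d : ℝ := Real.sqrt (R₁^2 + R₂^2) with hd
  have hd2 : (0:ℝ) < R₁^2 + R₂^2 := by positivity
  have hdpos : 0 < d := Real.sqrt_pos.mpr hd2
  have hdsq : d^2 = R₁^2 + R₂^2 := Real.sq_sqrt hd2.le
  -- sin θ and sin φ
  have hsθ : Real.sin θ = dist z w / (2 * R₁) := by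
    rw [hθ]; exact sin_angle_eq c₁ R₁ hR₁ z w p hz₁ hw₁ hp hzw hpz hpw
  have hsφ : Real.sin φ = dist z w / (2 * R₂) := by
    rw [hφ]; exact sin_angle_eq c₂ R₂ hR₂ z w q hz₂ hw₂ hq hzw hqz hqw
  have hdistpos : 0 < dist z w := dist_pos.mpr hzw
  have hsθpos : 0 < Real.sin θ := by rw [hsθ]; exact div_pos hdistpos (by positivity)
  have hsφpos : 0 < Real.sin φ := by rw [hsφ]; exact div_pos hdistpos (by positivity)
  -- sin θ * d = R₂, sin φ * d = R₁
  have hsθsq : (Real.sin θ)^2 * d^2 = R₂^2 := by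
    rw [hsθ, div_pow, hdsq, hdzw]
    field_simp
    linear_combination hL
  have hsφsq : (Real.sin φ)^2 * d^2 = R₁^2 := by
    rw [hsφ, div_pow, hdsq, hdzw]
    field_simp
    linear_combination hL
  have hsθd : Real.sin θ * d = R₂ := by
    apply (sq_eq_sq₀ (mul_pos hsθpos hdpos).le hR₂.le).mp
    rw [mul_pow]; exact hsθsq
  have hsφd : Real.sin φ * d = R₁ := by
    apply (sq_eq_sq₀ (mul_pos hsφpos hdpos).le hR₁.le).mp
    rw [mul_pow]; exact hsφsq
  -- cos θ * d = R₁, cos φ * d = R₂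
  have hθnn : 0 ≤ θ := by rw [hθ]; exact EuclideanGeometry.angle_nonneg _ _ _
  have hφnn : 0 ≤ φ := by rw [hφ]; exact EuclideanGeometry.angle_nonneg _ _ _
  have hcθpos : 0 < Real.cos θ := Real.cos_pos_of_mem_Ioo
    ⟨by linarith [Real.pi_pos], hθa⟩
  have hcφpos : 0 < Real.cos φ := Real.cos_pos_of_mem_Ioo
    ⟨by linarith [Real.pi_pos], hφa⟩
  have hcθd : Real.cos θ * d = R₁ := by
    apply (sq_eq_sq₀ (mul_pos hcθpos hdpos).le hR₁.le).mp
    rw [mul_pow]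
    linear_combination d^2 * Real.sin_sq_add_cos_sq θ - hsθsq + hdsq
  have hcφd : Real.cos φ * d = R₂ := by
    apply (sq_eq_sq₀ (mul_pos hcφpos hdpos).le hR₂.le).mp
    rw [mul_pow]
    linear_combination d^2 * Real.sin_sq_add_cos_sq φ - hsφsq + hdsq
  -- θ + φ = π/2
  have hsum : θ + φ = Real.pi / 2 := by
    have h1 : θ ∈ Set.Icc (-(Real.pi/2)) (Real.pi/2) :=
      ⟨by linarith [Real.pi_pos], hθa.le⟩
    have h2 : Real.pi/2 - φ ∈ Set.Icc (-(Real.pi/2)) (Real.pi/2) :=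
      ⟨by linarith [Real.pi_pos], by linarith⟩
    have heq : Real.sin θ = Real.sin (Real.pi/2 - φ) := by
      rw [Real.sin_pi_div_two_sub]
      have : Real.sin θ * d = Real.cos φ * d := by rw [hsθd, hcφd]
      exact mul_right_cancel₀ hdpos.ne' this
    have := Real.injOn_sin h1 h2 heq
    linarith
  refine ⟨hsum, ?_⟩
  have hc1 : Real.cos θ / Real.sin θ = R₁ / R₂ := by
    rw [div_eq_div_iff hsθpos.ne' hR₂.ne']
    linear_combination Real.sin θ * hcθd - Real.cos θ * hsθd
  have hc2 : Real.cos φ / Real.sin φ = R₂ / R₁ := by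
    rw [div_eq_div_iff hsφpos.ne' hR₁.ne']
    linear_combination Real.sin φ * hcφd - Real.cos φ * hsφd
  exact ⟨hc1, by simp only [rcot]; rw [hc1, hc2]⟩
end

section
/- Let three circles with radii R₁, R₂, R₃ > 0 be mutually externally tangent in the plane. Then the radius R of the circle passing through their three pairwise tangency points satisfies R² = R₁R₂R₃/(R₁+R₂+R₃). Moreover this circle intersects each of the three given circles orthogonally. -/
theorem stmt_18 (c₁ c₂ c₃ : ℂ) (R₁ R₂ R₃ : ℝ)
    (hR₁ : 0 < R₁) (hR₂ : 0 < R₂) (hR₃ : 0 < R₃)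
    -- mutual external tangency
    (h₁₂ : ‖c₁ - c₂‖ = R₁ + R₂)
    (h₂₃ : ‖c₂ - c₃‖ = R₂ + R₃)
    (h₃₁ : ‖c₃ - c₁‖ = R₃ + R₁)
    -- pairwise tangency points
    (z₁₂ z₂₃ z₃₁ : ℂ)
    (hz₁₂ : z₁₂ = c₁ + (R₁ / (R₁ + R₂)) • (c₂ - c₁))
    (hz₂₃ : z₂₃ = c₂ + (R₂ / (R₂ + R₃)) • (c₃ - c₂))
    (hz₃₁ : z₃₁ = c₃ + (R₃ / (R₃ + R₁)) • (c₁ - c₃))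
    -- any circle through the three tangency points
    (c : ℂ) (R : ℝ) (hR : 0 < R)
    (h₁ : ‖z₁₂ - c‖ = R) (h₂ : ‖z₂₃ - c‖ = R)
    (h₃ : ‖z₃₁ - c‖ = R) :
    R ^ 2 = R₁ * R₂ * R₃ / (R₁ + R₂ + R₃) ∧
      ‖c - c₁‖ ^ 2 = R ^ 2 + R₁ ^ 2 ∧
      ‖c - c₂‖ ^ 2 = R ^ 2 + R₂ ^ 2 ∧
      ‖c - c₃‖ ^ 2 = R ^ 2 + R₃ ^ 2 := by
  have hs12 : (0:ℝ) < R₁ + R₂ := by linarith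
  have hs23 : (0:ℝ) < R₂ + R₃ := by linarith
  have hs31 : (0:ℝ) < R₃ + R₁ := by linarith
  -- complex identities clearing denominators
  have k1 : ((R₁ + R₂ : ℝ) : ℂ) * (z₁₂ - c) = (R₂:ℂ)*(c₁-c) + (R₁:ℂ)*(c₂-c) := by
    rw [hz₁₂, Complex.real_smul]; push_cast
    have : ((R₁:ℂ) + R₂) ≠ 0 := by
      simpa using Complex.ofReal_ne_zero.mpr (ne_of_gt hs12)
    field_simp
    ring
  have k2 : ((R₂ + R₃ : ℝ) : ℂ) * (z₂₃ - c) = (R₃:ℂ)*(c₂-c) + (R₂:ℂ)*(c₃-c) := by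
    rw [hz₂₃, Complex.real_smul]; push_cast
    have : ((R₂:ℂ) + R₃) ≠ 0 := by
      simpa using Complex.ofReal_ne_zero.mpr (ne_of_gt hs23)
    field_simp
    ring
  have k3 : ((R₃ + R₁ : ℝ) : ℂ) * (z₃₁ - c) = (R₁:ℂ)*(c₃-c) + (R₃:ℂ)*(c₁-c) := by
    rw [hz₃₁, Complex.real_smul]; push_cast
    have : ((R₃:ℂ) + R₁) ≠ 0 := by
      simpa using Complex.ofReal_ne_zero.mpr (ne_of_gt hs31)
    field_simp
    ring
  -- squared-norm versions of the circle conditions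
  have F1 : (R₂*(c₁.re-c.re)+R₁*(c₂.re-c.re))^2 + (R₂*(c₁.im-c.im)+R₁*(c₂.im-c.im))^2
      = R^2*(R₁+R₂)^2 := by
    have hn : Complex.normSq (((R₁ + R₂ : ℝ) : ℂ) * (z₁₂ - c))
        = Complex.normSq ((R₂:ℂ)*(c₁-c) + (R₁:ℂ)*(c₂-c)) := by rw [k1]
    rw [map_mul, Complex.normSq_ofReal, ← Complex.sq_norm (z₁₂ - c), h₁] at hn
    simp only [Complex.normSq_apply, Complex.add_re, Complex.add_im, Complex.mul_re,
      Complex.mul_im, Complex.sub_re, Complex.sub_im, Complex.ofReal_re, Complex.ofReal_im] at hn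
    linear_combination -hn
  have F2 : (R₃*(c₂.re-c.re)+R₂*(c₃.re-c.re))^2 + (R₃*(c₂.im-c.im)+R₂*(c₃.im-c.im))^2
      = R^2*(R₂+R₃)^2 := by
    have hn : Complex.normSq (((R₂ + R₃ : ℝ) : ℂ) * (z₂₃ - c))
        = Complex.normSq ((R₃:ℂ)*(c₂-c) + (R₂:ℂ)*(c₃-c)) := by rw [k2]
    rw [map_mul, Complex.normSq_ofReal, ← Complex.sq_norm (z₂₃ - c), h₂] at hn
    simp only [Complex.normSq_apply, Complex.add_re, Complex.add_im, Complex.mul_re,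
      Complex.mul_im, Complex.sub_re, Complex.sub_im, Complex.ofReal_re, Complex.ofReal_im] at hn
    linear_combination -hn
  have F3 : (R₁*(c₃.re-c.re)+R₃*(c₁.re-c.re))^2 + (R₁*(c₃.im-c.im)+R₃*(c₁.im-c.im))^2
      = R^2*(R₃+R₁)^2 := by
    have hn : Complex.normSq (((R₃ + R₁ : ℝ) : ℂ) * (z₃₁ - c))
        = Complex.normSq ((R₁:ℂ)*(c₃-c) + (R₃:ℂ)*(c₁-c)) := by rw [k3]
    rw [map_mul, Complex.normSq_ofReal, ← Complex.sq_norm (z₃₁ - c), h₃] at hn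
    simp only [Complex.normSq_apply, Complex.add_re, Complex.add_im, Complex.mul_re,
      Complex.mul_im, Complex.sub_re, Complex.sub_im, Complex.ofReal_re, Complex.ofReal_im] at hn
    linear_combination -hn
  -- squared distances between centers
  have E12 : (c₁.re-c₂.re)^2 + (c₁.im-c₂.im)^2 = (R₁+R₂)^2 := by
    have hn : Complex.normSq (c₁ - c₂) = (R₁+R₂)^2 := by rw [← Complex.sq_norm, h₁₂]
    simp only [Complex.normSq_apply, Complex.sub_re, Complex.sub_im] at hn
    linear_combination hn
  have E23 : (c₂.re-c₃.re)^2 + (c₂.im-c₃.im)^2 = (R₂+R₃)^2 := by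
    have hn : Complex.normSq (c₂ - c₃) = (R₂+R₃)^2 := by rw [← Complex.sq_norm, h₂₃]
    simp only [Complex.normSq_apply, Complex.sub_re, Complex.sub_im] at hn
    linear_combination hn
  have E31 : (c₃.re-c₁.re)^2 + (c₃.im-c₁.im)^2 = (R₃+R₁)^2 := by
    have hn : Complex.normSq (c₃ - c₁) = (R₃+R₁)^2 := by rw [← Complex.sq_norm, h₃₁]
    simp only [Complex.normSq_apply, Complex.sub_re, Complex.sub_im] at hn
    linear_combination hn
  -- linear relations among the squared distances to c
  have G12 : R₂*((c₁.re-c.re)^2+(c₁.im-c.im)^2) + R₁*((c₂.re-c.re)^2+(c₂.im-c.im)^2)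
      = (R₁+R₂)*(R^2 + R₁*R₂) := by
    have h : (R₁+R₂) * (R₂*((c₁.re-c.re)^2+(c₁.im-c.im)^2)
        + R₁*((c₂.re-c.re)^2+(c₂.im-c.im)^2)) = (R₁+R₂) * ((R₁+R₂)*(R^2 + R₁*R₂)) := by
      linear_combination F1 + R₁*R₂*E12
    exact mul_left_cancel₀ (ne_of_gt hs12) h
  have G23 : R₃*((c₂.re-c.re)^2+(c₂.im-c.im)^2) + R₂*((c₃.re-c.re)^2+(c₃.im-c.im)^2)
      = (R₂+R₃)*(R^2 + R₂*R₃) := by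
    have h : (R₂+R₃) * (R₃*((c₂.re-c.re)^2+(c₂.im-c.im)^2)
        + R₂*((c₃.re-c.re)^2+(c₃.im-c.im)^2)) = (R₂+R₃) * ((R₂+R₃)*(R^2 + R₂*R₃)) := by
      linear_combination F2 + R₂*R₃*E23
    exact mul_left_cancel₀ (ne_of_gt hs23) h
  have G31 : R₁*((c₃.re-c.re)^2+(c₃.im-c.im)^2) + R₃*((c₁.re-c.re)^2+(c₁.im-c.im)^2)
      = (R₃+R₁)*(R^2 + R₃*R₁) := by
    have h : (R₃+R₁) * (R₁*((c₃.re-c.re)^2+(c₃.im-c.im)^2)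
        + R₃*((c₁.re-c.re)^2+(c₁.im-c.im)^2)) = (R₃+R₁) * ((R₃+R₁)*(R^2 + R₃*R₁)) := by
      linear_combination F3 + R₃*R₁*E31
    exact mul_left_cancel₀ (ne_of_gt hs31) h
  have hx : (c₁.re-c.re)^2+(c₁.im-c.im)^2 = R^2 + R₁^2 := by
    have h : (2*R₂*R₃) * ((c₁.re-c.re)^2+(c₁.im-c.im)^2) = (2*R₂*R₃) * (R^2 + R₁^2) := by
      linear_combination R₃*G12 + R₂*G31 - R₁*G23
    exact mul_left_cancel₀ (by positivity) h
  have hy : (c₂.re-c.re)^2+(c₂.im-c.im)^2 = R^2 + R₂^2 := by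
    have h : (2*R₃*R₁) * ((c₂.re-c.re)^2+(c₂.im-c.im)^2) = (2*R₃*R₁) * (R^2 + R₂^2) := by
      linear_combination R₁*G23 + R₃*G12 - R₂*G31
    exact mul_left_cancel₀ (by positivity) h
  have hz : (c₃.re-c.re)^2+(c₃.im-c.im)^2 = R^2 + R₃^2 := by
    have h : (2*R₁*R₂) * ((c₃.re-c.re)^2+(c₃.im-c.im)^2) = (2*R₁*R₂) * (R^2 + R₃^2) := by
      linear_combination R₂*G31 + R₁*G23 - R₃*G12
    exact mul_left_cancel₀ (by positivity) h
  -- inner products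
  have hp12 : (c₁.re-c.re)*(c₂.re-c.re)+(c₁.im-c.im)*(c₂.im-c.im) = R^2 - R₁*R₂ := by
    linear_combination hx/2 + hy/2 - E12/2
  have hp23 : (c₂.re-c.re)*(c₃.re-c.re)+(c₂.im-c.im)*(c₃.im-c.im) = R^2 - R₂*R₃ := by
    linear_combination hy/2 + hz/2 - E23/2
  have hp13 : (c₁.re-c.re)*(c₃.re-c.re)+(c₁.im-c.im)*(c₃.im-c.im) = R^2 - R₁*R₃ := by
    linear_combination hx/2 + hz/2 - E31/2
  -- Gram determinant of three plane vectors vanishes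
  have gram : ((c₁.re-c.re)^2+(c₁.im-c.im)^2) *
        (((c₂.re-c.re)^2+(c₂.im-c.im)^2) * ((c₃.re-c.re)^2+(c₃.im-c.im)^2)
          - ((c₂.re-c.re)*(c₃.re-c.re)+(c₂.im-c.im)*(c₃.im-c.im))^2)
      - ((c₁.re-c.re)*(c₂.re-c.re)+(c₁.im-c.im)*(c₂.im-c.im)) *
        (((c₁.re-c.re)*(c₂.re-c.re)+(c₁.im-c.im)*(c₂.im-c.im)) * ((c₃.re-c.re)^2+(c₃.im-c.im)^2)
          - ((c₂.re-c.re)*(c₃.re-c.re)+(c₂.im-c.im)*(c₃.im-c.im)) *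
            ((c₁.re-c.re)*(c₃.re-c.re)+(c₁.im-c.im)*(c₃.im-c.im)))
      + ((c₁.re-c.re)*(c₃.re-c.re)+(c₁.im-c.im)*(c₃.im-c.im)) *
        (((c₁.re-c.re)*(c₂.re-c.re)+(c₁.im-c.im)*(c₂.im-c.im)) *
            ((c₂.re-c.re)*(c₃.re-c.re)+(c₂.im-c.im)*(c₃.im-c.im))
          - ((c₂.re-c.re)^2+(c₂.im-c.im)^2) *
            ((c₁.re-c.re)*(c₃.re-c.re)+(c₁.im-c.im)*(c₃.im-c.im))) = 0 := by ring
  have m1 : ((c₁.re-c.re)^2+(c₁.im-c.im)^2) *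
        (((c₂.re-c.re)^2+(c₂.im-c.im)^2) * ((c₃.re-c.re)^2+(c₃.im-c.im)^2)
          - ((c₂.re-c.re)*(c₃.re-c.re)+(c₂.im-c.im)*(c₃.im-c.im))^2)
      = (R^2+R₁^2) * ((R^2+R₂^2)*(R^2+R₃^2) - (R^2-R₂*R₃)^2) := by
    rw [hx, hy, hz, hp23]
  have m2 : ((c₁.re-c.re)*(c₂.re-c.re)+(c₁.im-c.im)*(c₂.im-c.im)) *
        (((c₁.re-c.re)*(c₂.re-c.re)+(c₁.im-c.im)*(c₂.im-c.im)) * ((c₃.re-c.re)^2+(c₃.im-c.im)^2)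
          - ((c₂.re-c.re)*(c₃.re-c.re)+(c₂.im-c.im)*(c₃.im-c.im)) *
            ((c₁.re-c.re)*(c₃.re-c.re)+(c₁.im-c.im)*(c₃.im-c.im)))
      = (R^2-R₁*R₂) * ((R^2-R₁*R₂)*(R^2+R₃^2) - (R^2-R₂*R₃)*(R^2-R₁*R₃)) := by
    rw [hp12, hz, hp23, hp13]
  have m3 : ((c₁.re-c.re)*(c₃.re-c.re)+(c₁.im-c.im)*(c₃.im-c.im)) *
        (((c₁.re-c.re)*(c₂.re-c.re)+(c₁.im-c.im)*(c₂.im-c.im)) *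
            ((c₂.re-c.re)*(c₃.re-c.re)+(c₂.im-c.im)*(c₃.im-c.im))
          - ((c₂.re-c.re)^2+(c₂.im-c.im)^2) *
            ((c₁.re-c.re)*(c₃.re-c.re)+(c₁.im-c.im)*(c₃.im-c.im)))
      = (R^2-R₁*R₃) * ((R^2-R₁*R₂)*(R^2-R₂*R₃) - (R^2+R₂^2)*(R^2-R₁*R₃)) := by
    rw [hp13, hp12, hp23, hy]
  have h4 : (4*R₁*R₂*R₃) * ((R₁+R₂+R₃)*R^2 - R₁*R₂*R₃) = 0 := by
    linear_combination gram - m1 + m2 - m3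
  have key : (R₁+R₂+R₃)*R^2 - R₁*R₂*R₃ = 0 :=
    (mul_eq_zero.mp h4).resolve_left (by positivity)
  refine ⟨?_, ?_, ?_, ?_⟩
  · rw [eq_div_iff (by positivity)]; linarith [key]
  · rw [Complex.sq_norm]
    simp only [Complex.normSq_apply, Complex.sub_re, Complex.sub_im]
    linear_combination hx
  · rw [Complex.sq_norm]
    simp only [Complex.normSq_apply, Complex.sub_re, Complex.sub_im]
    linear_combination hy
  · rw [Complex.sq_norm]
    simp only [Complex.normSq_apply, Complex.sub_re, Complex.sub_im]
    linear_combination hz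
end

section
/- Let three circles of radii R₁,R₂,R₃ > 0 with centers c₁,c₂,c₃ ∈ ℂ be mutually externally tangent, with pairwise tangency points z₁₂, z₂₃, z₃₁. Let R denote the radius of the circle through z₁₂, z₂₃, z₃₁. Then z₂₃ − z₁₂ = R₂·((c₂−c₁)/(R₁+R₂) + (c₃−c₂)/(R₃+R₂)) and also z₂₃ − z₁₂ = i·R·((c₂−c₁)/(R₁+R₂) − (c₃−c₂)/(R₃+R₂)). -/
set_option maxHeartbeats 1000000 in
theorem stmt_19 (c₁ c₂ c₃ : ℂ) (R₁ R₂ R₃ : ℝ)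
    (hR₁ : 0 < R₁) (hR₂ : 0 < R₂) (hR₃ : 0 < R₃)
    -- mutual external tangency
    (h₁₂ : ‖c₁ - c₂‖ = R₁ + R₂)
    (h₂₃ : ‖c₂ - c₃‖ = R₂ + R₃)
    (h₃₁ : ‖c₃ - c₁‖ = R₃ + R₁)
    -- the triangle of centers is positively oriented
    (horient : ((c₃ - c₁) / (c₂ - c₁)).im > 0)
    -- pairwise tangency points
    (z₁₂ z₂₃ : ℂ)
    (hz₁₂ : z₁₂ = c₁ + (R₁ / (R₁ + R₂)) • (c₂ - c₁))
    (hz₂₃ : z₂₃ = c₂ + (R₂ / (R₂ + R₃)) • (c₃ - c₂))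
    -- the radius of the circle through the tangency points
    (R : ℝ) (hR : 0 < R) (hR2 : R ^ 2 = R₁ * R₂ * R₃ / (R₁ + R₂ + R₃)) :
    z₂₃ - z₁₂ =
        (R₂ : ℂ) * ((c₂ - c₁) / (R₁ + R₂) + (c₃ - c₂) / (R₃ + R₂)) ∧
      z₂₃ - z₁₂ =
        Complex.I * R * ((c₂ - c₁) / (R₁ + R₂) - (c₃ - c₂) / (R₃ + R₂)) := by
  have ha : (0:ℝ) < R₁ + R₂ := by linarith
  have hb : (0:ℝ) < R₂ + R₃ := by linarith
  have hS : (0:ℝ) < R₁ + R₂ + R₃ := by linarith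
  have hA : ((R₁:ℂ) + R₂) ≠ 0 := by
    norm_cast; exact ne_of_gt ha
  have hB : ((R₃:ℂ) + R₂) ≠ 0 := by
    norm_cast; linarith
  have hB' : ((R₂:ℂ) + R₃) ≠ 0 := by
    norm_cast; linarith
  -- Part 1
  have part1 : z₂₃ - z₁₂ =
      (R₂ : ℂ) * ((c₂ - c₁) / (R₁ + R₂) + (c₃ - c₂) / (R₃ + R₂)) := by
    subst hz₁₂ hz₂₃
    rw [Complex.real_smul, Complex.real_smul]
    push_cast
    field_simp
    ring
  refine ⟨part1, ?_⟩
  -- norms of the sides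
  have hnp : Complex.normSq (c₂ - c₁) = (R₁ + R₂)^2 := by
    rw [show c₂ - c₁ = -(c₁ - c₂) by ring, Complex.normSq_neg, ← Complex.sq_norm, h₁₂]
  have hnq : Complex.normSq (c₃ - c₂) = (R₂ + R₃)^2 := by
    rw [show c₃ - c₂ = -(c₂ - c₃) by ring, Complex.normSq_neg, ← Complex.sq_norm, h₂₃]
  have hns : Complex.normSq (c₃ - c₁) = (R₃ + R₁)^2 := by
    rw [← Complex.sq_norm, h₃₁]
  set W : ℂ := (c₂ - c₁) * (starRingEnd ℂ) (c₃ - c₂) with hWdef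
  have hkey : Complex.normSq (c₃ - c₁) =
      Complex.normSq (c₂ - c₁) + Complex.normSq (c₃ - c₂) + 2 * W.re := by
    rw [show c₃ - c₁ = (c₂ - c₁) + (c₃ - c₂) by ring]
    exact Complex.normSq_add _ _
  have hre : W.re = R₁*R₃ - R₁*R₂ - R₂*R₃ - R₂^2 := by
    rw [hnp, hnq, hns] at hkey
    linarith [hkey, sq_nonneg (R₁+R₂+R₃), (by ring : (R₃+R₁)^2 - (R₁+R₂)^2 - (R₂+R₃)^2 = 2*(R₁*R₃ - R₁*R₂ - R₂*R₃ - R₂^2))]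
  have hnW : Complex.normSq W = ((R₁+R₂) * (R₂+R₃))^2 := by
    rw [hWdef, Complex.normSq_mul, Complex.normSq_conj, hnp, hnq]; ring
  have him2 : W.im^2 = 4 * R₁ * R₂ * R₃ * (R₁ + R₂ + R₃) := by
    have h := (Complex.normSq_apply W).symm.trans hnW
    rw [hre] at h
    linear_combination h
  -- orientation gives W.im < 0
  have hp0 : c₂ - c₁ ≠ 0 := by
    intro h
    rw [show c₁ - c₂ = -(c₂ - c₁) by ring, h] at h₁₂
    simp at h₁₂
    linarith
  have hq0 : c₃ - c₂ ≠ 0 := by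
    intro h
    rw [show c₂ - c₃ = -(c₃ - c₂) by ring, h] at h₂₃
    simp at h₂₃
    linarith
  set r : ℂ := (c₃ - c₁) / (c₂ - c₁) with hrdef
  have hq' : c₃ - c₂ = (r - 1) * (c₂ - c₁) := by
    rw [hrdef]
    field_simp
    ring
  have hWr : W = ((R₁+R₂)^2 : ℝ) * (starRingEnd ℂ) (r - 1) := by
    calc W = ((c₂ - c₁) * (starRingEnd ℂ) (c₂ - c₁)) * (starRingEnd ℂ) (r - 1) := by
            rw [hWdef, hq', map_mul]; ring
      _ = ((R₁+R₂)^2 : ℝ) * (starRingEnd ℂ) (r - 1) := by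
            rw [Complex.mul_conj, hnp]
  have himneg : W.im < 0 := by
    have : W.im = (R₁+R₂)^2 * (-(r.im)) := by
      rw [hWr]
      simp only [Complex.mul_im, Complex.ofReal_re, Complex.ofReal_im, Complex.conj_im,
        Complex.conj_re, Complex.sub_im, Complex.one_im]
      ring
    rw [this]
    have : (0:ℝ) < (R₁+R₂)^2 := by positivity
    nlinarith [horient]
  have hR2' : R^2 * (R₁ + R₂ + R₃) = R₁ * R₂ * R₃ := by
    field_simp at hR2; linarith [hR2]
  have hyim : W.im = -2 * R * (R₁ + R₂ + R₃) := by
    have h0 : (W.im - (-2 * R * (R₁ + R₂ + R₃))) * (W.im + (-2 * R * (R₁ + R₂ + R₃))) = 0 := by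
      linear_combination him2 - 4*(R₁+R₂+R₃)*hR2'
    rcases mul_eq_zero.mp h0 with h | h
    · linarith
    · exfalso
      have : -2 * R * (R₁ + R₂ + R₃) < 0 := by nlinarith
      nlinarith
  -- the key complex identity, multiplied through by conj(c₃-c₂)
  have key : (R₂:ℂ) * (W + ((R₁+R₂)*(R₂+R₃) : ℝ)) =
      Complex.I * R * (W - ((R₁+R₂)*(R₂+R₃) : ℝ)) := by
    apply Complex.ext
    · simp only [Complex.mul_re, Complex.mul_im, Complex.add_re, Complex.add_im,
        Complex.sub_re, Complex.sub_im, Complex.I_re, Complex.I_im,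
        Complex.ofReal_re, Complex.ofReal_im]
      rw [hre, hyim]
      linear_combination (-2:ℝ)*hR2'
    · simp only [Complex.mul_re, Complex.mul_im, Complex.add_re, Complex.add_im,
        Complex.sub_re, Complex.sub_im, Complex.I_re, Complex.I_im,
        Complex.ofReal_re, Complex.ofReal_im]
      rw [hre, hyim]
      ring
  have hqq : (c₃ - c₂) * (starRingEnd ℂ) (c₃ - c₂) = (((R₂+R₃)^2 : ℝ) : ℂ) := by
    rw [Complex.mul_conj, hnq]
  have hc0 : (starRingEnd ℂ) (c₃ - c₂) ≠ 0 := by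
    intro h
    apply hq0
    have := congrArg (starRingEnd ℂ) h
    simpa using this
  have main : (R₂:ℂ) * (((R₂:ℂ)+R₃) * (c₂ - c₁) + ((R₁:ℂ)+R₂) * (c₃ - c₂)) =
      Complex.I * R * (((R₂:ℂ)+R₃) * (c₂ - c₁) - ((R₁:ℂ)+R₂) * (c₃ - c₂)) := by
    apply mul_right_cancel₀ hc0
    have key' := key
    rw [hWdef] at key'
    push_cast at key' hqq ⊢
    linear_combination ((R₂:ℂ)+R₃) * key' + ((R₂:ℂ) + Complex.I*R) * ((R₁:ℂ)+R₂) * hqq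
  rw [part1]
  field_simp
  linear_combination main
end
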